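/- Let V : [0,∞) → ℝ be a right-continuous function with left limits, of finite variation on every compact interval, with canonical decomposition V = V^c + V^d into its continuous part V^c and pure-jump part V^d. If V^c is not identically equal to V^c(0) (i.e., the continuous part is nondegenerate), then the set of levels x ∈ ℝ through which V increases or decreases at some time, {x ∈ ℝ : ℐ(x) ∪ 𝒟(x) ≠ ∅}, has positive Lebesgue (outer) measure. -/

import Mathlib

open MeasureTheory Set Filter
open scoped ENNReal NNReal

noncomputable section

/-- `V` increases through the level `x` at time `t`: `t > 0`, `V t = x`, `V` is continuous
at `t` (within the domain `[0,∞)`), and `V s - V t` has the same sign as `s - t` for all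
`s ≥ 0` in some neighborhood of `t`. -/
def IncreasesThrough (V : ℝ → ℝ) (x t : ℝ) : Prop :=
  0 < t ∧ V t = x ∧ ContinuousWithinAt V (Set.Ici 0) t ∧
    ∃ ε > 0, ∀ s ∈ Set.Ici (0 : ℝ), |s - t| < ε →
      ((s < t → V s < V t) ∧ (t < s → V t < V s))

/-- `V` decreases through the level `x` at time `t` iff `-V` increases through `-x` at `t`. -/
def DecreasesThrough (V : ℝ → ℝ) (x t : ℝ) : Prop :=
  IncreasesThrough (fun s => -V s) (-x) t

/-- `(0,t] ∩ ℐ(x)`: the increasing passage times of `V` through `x` up to time `t`. -/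
def incSet (V : ℝ → ℝ) (x t : ℝ) : Set ℝ :=
  {s | s ∈ Set.Ioc 0 t ∧ IncreasesThrough V x s}

/-- `(0,t] ∩ 𝒟(x)`: the decreasing passage times of `V` through `x` up to time `t`. -/
def decSet (V : ℝ → ℝ) (x t : ℝ) : Set ℝ :=
  {s | s ∈ Set.Ioc 0 t ∧ DecreasesThrough V x s}

/-- The signed local time `ℓ^x(t) = Card((0,t] ∩ ℐ(x)) − Card((0,t] ∩ 𝒟(x))`
(meaningful when both sets are finite). -/
def signedLocalTime (V : ℝ → ℝ) (x t : ℝ) : ℤ :=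
  ((incSet V x t).ncard : ℤ) - ((decSet V x t).ncard : ℤ)

/-- The absolute local time `λ^x(t) = Card((0,t] ∩ ℐ(x)) + Card((0,t] ∩ 𝒟(x))`
(meaningful when both sets are finite). -/
def absLocalTime (V : ℝ → ℝ) (x t : ℝ) : ℕ :=
  (incSet V x t).ncard + (decSet V x t).ncard


noncomputable def hitInd (V : ℝ → ℝ) (u : ℕ → ℝ) (x : ℝ) (i : ℕ) : ℝ≥0∞ :=
  Set.indicator (Set.Icc (min (V (u i)) (V (u (i+1)))) (max (V (u i)) (V (u (i+1)))))
    (fun _ => 1) x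

lemma hitInd_eq_one {V : ℝ → ℝ} {u : ℕ → ℝ} {x : ℝ} {i : ℕ}
    (h1 : min (V (u i)) (V (u (i+1))) ≤ x) (h2 : x ≤ max (V (u i)) (V (u (i+1)))) :
    hitInd V u x i = 1 :=
  Set.indicator_of_mem (Set.mem_Icc.2 ⟨h1, h2⟩) _

lemma signwalk (g : ℕ → ℝ) (x : ℝ) :
    ∀ p q : ℕ, p < q → min (g p) (g q) ≤ x → x ≤ max (g p) (g q) →
    ∃ i, p ≤ i ∧ i < q ∧ min (g i) (g (i+1)) ≤ x ∧ x ≤ max (g i) (g (i+1)) := by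
  intro p q hpq h1 h2
  by_contra hcon
  push_neg at hcon
  have side : ∀ i, p ≤ i → i < q → (g i < x ∧ g (i+1) < x) ∨ (x < g i ∧ x < g (i+1)) := by
    intro i hpi hiq
    rcases le_or_gt (min (g i) (g (i+1))) x with hm | hm
    · have hmax := hcon i hpi hiq hm
      have h3 : max (g i) (g (i+1)) < x := hmax
      exact Or.inl ⟨(le_max_left _ _).trans_lt h3, (le_max_right _ _).trans_lt h3⟩
    · exact Or.inr ⟨(lt_min_iff.1 hm).1, (lt_min_iff.1 hm).2⟩
  -- propagate: for all i in [p, q], g i is strictly on the same side as g p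
  have prop : ∀ i, p ≤ i → i ≤ q → ((g i < x ∧ g p < x) ∨ (x < g i ∧ x < g p)) := by
    intro i hpi hiq
    induction i, hpi using Nat.le_induction with
    | base =>
      rcases side p le_rfl hpq with h | h
      · exact Or.inl ⟨h.1, h.1⟩
      · exact Or.inr ⟨h.1, h.1⟩
    | succ n hpn ih =>
      have hnq : n < q := lt_of_lt_of_le (Nat.lt_succ_self n) hiq
      rcases ih (le_of_lt hnq) with h | h
      · rcases side n hpn hnq with h' | h'
        · exact Or.inl ⟨h'.2, h.2⟩
        · exact absurd h'.1 (not_lt_of_gt h.1)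
      · rcases side n hpn hnq with h' | h'
        · exact absurd h'.1 (not_lt_of_gt h.1)
        · exact Or.inr ⟨h'.2, h.2⟩
  rcases prop q (le_of_lt hpq) le_rfl with h | h
  · exact absurd h2 (not_le_of_gt (max_lt h.2 h.1))
  · exact absurd h1 (not_le_of_gt (lt_min h.2 h.1))

/-- Grid monotonicity / counting: hits of a coarse grid are dominated by hits of a fine grid. -/
lemma gridmono (V : ℝ → ℝ) (x : ℝ) (u u' : ℕ → ℝ) (φ : ℕ → ℕ) :
    ∀ m : ℕ, (∀ i ≤ m, u i = u' (φ i)) → (∀ i < m, φ i < φ (i+1)) →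
    ∑ i ∈ Finset.range m, hitInd V u x i ≤ ∑ i ∈ Finset.Ico (φ 0) (φ m), hitInd V u' x i := by
  intro m
  induction m with
  | zero => simp
  | succ n ih =>
    intro hφ hφs
    have hmono : ∀ i, i ≤ n + 1 → φ 0 ≤ φ i := by
      intro i
      induction i with
      | zero => exact fun _ => le_rfl
      | succ k ihk =>
        exact fun hk => (ihk (Nat.le_of_succ_le hk)).trans (le_of_lt (hφs k (Nat.lt_of_succ_le hk)))
    have hsplit : ∑ i ∈ Finset.Ico (φ 0) (φ n), hitInd V u' x i
        + ∑ i ∈ Finset.Ico (φ n) (φ (n+1)), hitInd V u' x i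
        = ∑ i ∈ Finset.Ico (φ 0) (φ (n+1)), hitInd V u' x i :=
      Finset.sum_Ico_consecutive _ (hmono n (Nat.le_succ n)) (le_of_lt (hφs n (Nat.lt_succ_self n)))
    rw [Finset.sum_range_succ, ← hsplit]
    have h1 : ∑ i ∈ Finset.range n, hitInd V u x i ≤ ∑ i ∈ Finset.Ico (φ 0) (φ n), hitInd V u' x i :=
      ih (fun i hi => hφ i (hi.trans (Nat.le_succ n))) (fun i hi => hφs i (hi.trans (Nat.lt_succ_self n)))
    have h2 : hitInd V u x n ≤ ∑ i ∈ Finset.Ico (φ n) (φ (n+1)), hitInd V u' x i := by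
      by_cases hhit : x ∈ Set.Icc (min (V (u n)) (V (u (n+1)))) (max (V (u n)) (V (u (n+1))))
      · obtain ⟨hlo, hhi⟩ := Set.mem_Icc.1 hhit
        rw [hφ n (Nat.le_succ n), hφ (n+1) le_rfl] at hlo hhi
        obtain ⟨i, hi1, hi2, hi3, hi4⟩ :=
          signwalk (fun j => V (u' j)) x (φ n) (φ (n+1)) (hφs n (Nat.lt_succ_self n)) hlo hhi
        calc hitInd V u x n ≤ 1 := by
              unfold hitInd; exact Set.indicator_le_self' (by simp) x |>.trans (by simp)
          _ = hitInd V u' x i := (hitInd_eq_one hi3 hi4).symm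
          _ ≤ _ := Finset.single_le_sum (f := fun i => hitInd V u' x i)
                (fun _ _ => zero_le) (Finset.mem_Ico.2 ⟨hi1, hi2⟩)
      · rw [hitInd, Set.indicator_of_notMem hhit]
        exact zero_le
    exact add_le_add h1 h2

section Grids

variable (V : ℝ → ℝ) (a b : ℝ)

/-- enumeration of the rationals in `[a,b]`, padded with `a`. -/
noncomputable def gridE (n : ℕ) : ℝ :=
  if (((Denumerable.eqv ℚ).symm n : ℚ) : ℝ) ∈ Set.Icc a b then (((Denumerable.eqv ℚ).symm n : ℚ) : ℝ) else a

noncomputable def gridL (k : ℕ) : Finset ℝ := insert a ((Finset.range k).image (gridE a b))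

lemma gridL_nonempty (k : ℕ) : (gridL a b k).Nonempty := ⟨a, Finset.mem_insert_self _ _⟩

lemma gridL_subset (hab : a ≤ b) (k : ℕ) : ∀ y ∈ gridL a b k, y ∈ Set.Icc a b := by
  intro y hy
  rcases Finset.mem_insert.1 hy with h | h
  · rw [h]; exact ⟨le_rfl, hab⟩
  · obtain ⟨n, _, rfl⟩ := Finset.mem_image.1 h
    unfold gridE
    split
    · assumption
    · exact ⟨le_rfl, hab⟩

lemma gridL_mono {k k' : ℕ} (h : k ≤ k') : gridL a b k ⊆ gridL a b k' :=
  Finset.insert_subset_insert _ (Finset.image_subset_image (by simpa using Finset.range_subset_range.2 h))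

lemma mem_gridL {q : ℚ} (hq : (q : ℝ) ∈ Set.Icc a b) {k : ℕ} (hk : Denumerable.eqv ℚ q < k) :
    (q : ℝ) ∈ gridL a b k := by
  refine Finset.mem_insert_of_mem (Finset.mem_image.2 ⟨Denumerable.eqv ℚ q, Finset.mem_range.2 hk, ?_⟩)
  simp only [gridE, Equiv.symm_apply_apply]
  exact if_pos hq

lemma gridL_card_pos (k : ℕ) : 0 < (gridL a b k).card :=
  Finset.card_pos.2 (gridL_nonempty a b k)

lemma min_lt_gridL_card (k i : ℕ) : min i ((gridL a b k).card - 1) < (gridL a b k).card :=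
  lt_of_le_of_lt (min_le_right _ _) (Nat.sub_lt (gridL_card_pos a b k) one_pos)

noncomputable def gridU (k : ℕ) (i : ℕ) : ℝ :=
  ((gridL a b k).orderIsoOfFin rfl ⟨min i ((gridL a b k).card - 1), min_lt_gridL_card a b k i⟩ : ℝ)

lemma gridU_mem (k i : ℕ) : gridU a b k i ∈ gridL a b k :=
  ((gridL a b k).orderIsoOfFin rfl _).2

lemma gridU_mono (k : ℕ) : Monotone (gridU a b k) := by
  intro i j hij
  exact Subtype.coe_le_coe.2 (((gridL a b k).orderIsoOfFin rfl).le_iff_le.2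
    (Fin.mk_le_mk.2 (min_le_min hij le_rfl)))

lemma gridU_strict (k : ℕ) {i j : ℕ} (hij : i < j) (hj : j ≤ (gridL a b k).card - 1) :
    gridU a b k i < gridU a b k j := by
  refine Subtype.coe_lt_coe.2 (((gridL a b k).orderIsoOfFin rfl).lt_iff_lt.2
    (Fin.mk_lt_mk.2 ?_))
  have := gridL_card_pos a b k
  omega

noncomputable def gridIdx (k : ℕ) (y : ℝ) (hy : y ∈ gridL a b k) : ℕ :=
  (((gridL a b k).orderIsoOfFin rfl).symm ⟨y, hy⟩ : Fin (gridL a b k).card)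

lemma gridIdx_le (k : ℕ) (y : ℝ) (hy : y ∈ gridL a b k) :
    gridIdx a b k y hy ≤ (gridL a b k).card - 1 := by
  have := (((gridL a b k).orderIsoOfFin rfl).symm ⟨y, hy⟩).2
  unfold gridIdx; omega

lemma gridU_gridIdx (k : ℕ) (y : ℝ) (hy : y ∈ gridL a b k) :
    gridU a b k (gridIdx a b k y hy) = y := by
  have h := gridIdx_le a b k y hy
  unfold gridU
  have he : (⟨min (gridIdx a b k y hy) ((gridL a b k).card - 1), min_lt_gridL_card a b k _⟩ :
      Fin (gridL a b k).card) = ((gridL a b k).orderIsoOfFin rfl).symm ⟨y, hy⟩ := by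
    apply Fin.ext
    simp only [gridIdx] at h ⊢
    omega
  rw [he]
  exact congrArg Subtype.val (((gridL a b k).orderIsoOfFin rfl).apply_symm_apply ⟨y, hy⟩)

lemma gridIdx_strictMono (k : ℕ) {y y' : ℝ} (hy : y ∈ gridL a b k) (hy' : y' ∈ gridL a b k)
    (h : y < y') : gridIdx a b k y hy < gridIdx a b k y' hy' :=
  (((gridL a b k).orderIsoOfFin rfl).symm).lt_iff_lt.2 (Subtype.mk_lt_mk.2 h)

end Grids

section CountFn

variable (V : ℝ → ℝ) (a b : ℝ)

/-- the level-counting function over the `k`-th grid -/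
noncomputable def countFn (k : ℕ) (x : ℝ) : ℝ≥0∞ :=
  ∑ i ∈ Finset.range ((gridL a b k).card - 1), hitInd V (gridU a b k) x i

lemma countFn_measurable (k : ℕ) : Measurable (countFn V a b k) := by
  apply Finset.measurable_sum
  intro i _
  exact Measurable.indicator measurable_const measurableSet_Icc

lemma countFn_lintegral (hab : a ≤ b) (k : ℕ) :
    ∫⁻ x, countFn V a b k x ≤ eVariationOn V (Set.Icc a b) := by
  have h1 : ∫⁻ x, countFn V a b k x
      = ∑ i ∈ Finset.range ((gridL a b k).card - 1), ∫⁻ x, hitInd V (gridU a b k) x i := by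
    unfold countFn
    exact lintegral_finset_sum _ (fun i _ => Measurable.indicator measurable_const measurableSet_Icc)
  rw [h1]
  have h2 : ∀ i, ∫⁻ x, hitInd V (gridU a b k) x i
      = edist (V (gridU a b k (i+1))) (V (gridU a b k i)) := by
    intro i
    unfold hitInd
    rw [show (fun (_ : ℝ) => (1:ℝ≥0∞)) = (1 : ℝ → ℝ≥0∞) from rfl, lintegral_indicator_one measurableSet_Icc,
      Real.volume_Icc, max_sub_min_eq_abs, edist_dist, Real.dist_eq]
  calc ∑ i ∈ Finset.range ((gridL a b k).card - 1), ∫⁻ x, hitInd V (gridU a b k) x i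
      = ∑ i ∈ Finset.range ((gridL a b k).card - 1),
        edist (V (gridU a b k (i+1))) (V (gridU a b k i)) := Finset.sum_congr rfl (fun i _ => h2 i)
    _ ≤ eVariationOn V (Set.Icc a b) :=
        eVariationOn.sum_le (f := V) (gridU_mono a b k)
          (fun i => gridL_subset a b hab k _ (gridU_mem a b k i))

lemma countFn_mono {k k' : ℕ} (hk : k ≤ k') (x : ℝ) :
    countFn V a b k x ≤ countFn V a b k' x := by
  set φ : ℕ → ℕ := fun i => gridIdx a b k' (gridU a b k i) (gridL_mono a b hk (gridU_mem a b k i))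
    with hφdef
  have hφ : ∀ i ≤ (gridL a b k).card - 1, gridU a b k i = gridU a b k' (φ i) := by
    intro i _
    exact (gridU_gridIdx a b k' _ _).symm
  have hφs : ∀ i < (gridL a b k).card - 1, φ i < φ (i+1) := by
    intro i hi
    exact gridIdx_strictMono a b k' _ _ (gridU_strict a b k (Nat.lt_succ_self i) (by omega))
  have h1 := gridmono V x (gridU a b k) (gridU a b k') φ ((gridL a b k).card - 1) hφ hφs
  refine h1.trans (Finset.sum_le_sum_of_subset ?_)
  intro i hi
  rw [Finset.mem_Ico] at hi
  rw [Finset.mem_range]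
  exact lt_of_lt_of_le hi.2 (gridIdx_le a b k' _ _)

/-- A strictly increasing chain of grid points straddling `x` gives a lower bound on `countFn`. -/
lemma countFn_chain_le {k n : ℕ} {x : ℝ} (q : ℕ → ℝ)
    (hmem : ∀ i ≤ n, q i ∈ gridL a b k)
    (hlt : ∀ i < n, q i < q (i+1))
    (hstrad : ∀ i < n, min (V (q i)) (V (q (i+1))) ≤ x ∧ x ≤ max (V (q i)) (V (q (i+1)))) :
    (n : ℝ≥0∞) ≤ countFn V a b k x := by
  set φ : ℕ → ℕ := fun i => if h : i ≤ n then gridIdx a b k (q i) (hmem i h) else 0 with hφdef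
  have hφ : ∀ i ≤ n, q i = gridU a b k (φ i) := by
    intro i hi
    simp only [hφdef, dif_pos hi]
    exact (gridU_gridIdx a b k _ _).symm
  have hφs : ∀ i < n, φ i < φ (i+1) := by
    intro i hi
    simp only [hφdef, dif_pos (le_of_lt hi), dif_pos (Nat.succ_le_of_lt hi)]
    exact gridIdx_strictMono a b k _ _ (hlt i hi)
  have h1 := gridmono V x q (gridU a b k) φ n hφ hφs
  have h0 : (n : ℝ≥0∞) = ∑ i ∈ Finset.range n, hitInd V q x i := by
    rw [Finset.sum_congr rfl (fun i hi => hitInd_eq_one (hstrad i (Finset.mem_range.1 hi)).1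
      (hstrad i (Finset.mem_range.1 hi)).2)]
    simp
  rw [h0]
  refine h1.trans ((Finset.sum_le_sum_of_subset ?_).trans le_rfl)
  intro i hi
  rw [Finset.mem_Ico] at hi
  rw [Finset.mem_range]
  have : φ n ≤ (gridL a b k).card - 1 := by
    simp only [hφdef, dif_pos le_rfl]
    exact gridIdx_le a b k _ _
  omega

end CountFn

section Chain

/-- From a point with `V s < x`, `s < t`, and right continuity, find a rational point. -/
lemma exists_rat_lt_level (V : ℝ → ℝ) {s t x : ℝ} (hrc : ContinuousWithinAt V (Set.Ici s) s)
    (hst : s < t) (hV : V s < x) : ∃ r : ℚ, s < (r:ℝ) ∧ (r:ℝ) < t ∧ V r < x := by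
  have h1 : V ⁻¹' (Set.Iio x) ∈ nhdsWithin s (Set.Ici s) :=
    hrc (isOpen_Iio.mem_nhds hV)
  rw [mem_nhdsWithin] at h1
  obtain ⟨U, hU, hsU, hsub⟩ := h1
  obtain ⟨l, u, hlu, hUsub⟩ := mem_nhds_iff_exists_Ioo_subset.1 (hU.mem_nhds hsU)
  obtain ⟨r, hr1, hr2⟩ := exists_rat_btwn (lt_min hlu.2 hst)
  refine ⟨r, hr1, lt_of_lt_of_le hr2 (min_le_right _ _), ?_⟩
  have : (r:ℝ) ∈ U ∩ Set.Ici s :=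
    ⟨hUsub ⟨hlu.1.trans hr1, lt_of_lt_of_le hr2 (min_le_left _ _)⟩, le_of_lt hr1⟩
  exact hsub this

lemma exists_rat_gt_level (V : ℝ → ℝ) {s t x : ℝ} (hrc : ContinuousWithinAt V (Set.Ici s) s)
    (hst : s < t) (hV : x < V s) : ∃ r : ℚ, s < (r:ℝ) ∧ (r:ℝ) < t ∧ x < V r := by
  obtain ⟨r, h1, h2, h3⟩ := exists_rat_lt_level (fun y => -V y) hrc.neg hst (neg_lt_neg hV)
  exact ⟨r, h1, h2, by linarith⟩

noncomputable def chainAux (g : ℝ → Bool → ℚ) (a : ℝ) : ℕ → ℚ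
  | 0 => g a true
  | n+1 => g ((chainAux g a n : ℚ) : ℝ) (decide (Even (n+1)))

/-- From an infinite-alternation point, build an arbitrarily long rational straddling chain. -/
lemma infAlt_chain (V : ℝ → ℝ) {a b x : ℝ} (ha : 0 ≤ a)
    (hrc : ∀ s ∈ Set.Ici (0:ℝ), ContinuousWithinAt V (Set.Ici s) s)
    (halt : ∃ t ∈ Set.Ioc a b, ∀ u ∈ Set.Ico a t,
      (∃ s ∈ Set.Ioo u t, V s < x) ∧ (∃ s ∈ Set.Ioo u t, x < V s)) :
    ∃ q : ℕ → ℚ, (∀ i, (q i : ℝ) ∈ Set.Ioo a b ∧ (q i : ℝ) < (q (i+1) : ℝ)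
      ∧ min (V (q i)) (V (q (i+1))) ≤ x ∧ x ≤ max (V (q i)) (V (q (i+1)))) := by
  obtain ⟨t, ht, H⟩ := halt
  -- step: from u ∈ [a,t) get a rational in (u,t) on the prescribed side
  have step : ∀ u ∈ Set.Ico a t, ∀ bl : Bool,
      ∃ r : ℚ, (r:ℝ) ∈ Set.Ioo u t ∧ (bl = true → V r < x) ∧ (bl = false → x < V r) := by
    intro u hu bl
    cases bl
    · obtain ⟨s, hs, hVs⟩ := (H u hu).2
      have hs0 : s ∈ Set.Ici (0:ℝ) := le_trans (le_trans ha hu.1) (le_of_lt hs.1)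
      obtain ⟨r, h1, h2, h3⟩ := exists_rat_gt_level V (hrc s hs0) hs.2 hVs
      exact ⟨r, ⟨hs.1.trans h1, h2⟩, by simp, fun _ => h3⟩
    · obtain ⟨s, hs, hVs⟩ := (H u hu).1
      have hs0 : s ∈ Set.Ici (0:ℝ) := le_trans (le_trans ha hu.1) (le_of_lt hs.1)
      obtain ⟨r, h1, h2, h3⟩ := exists_rat_lt_level V (hrc s hs0) hs.2 hVs
      exact ⟨r, ⟨hs.1.trans h1, h2⟩, fun _ => h3, by simp⟩
  classical
  set g : ℝ → Bool → ℚ := fun u bl =>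
    if h : u ∈ Set.Ico a t then Classical.choose (step u h bl) else 0 with hgdef
  have hg : ∀ u (hu : u ∈ Set.Ico a t) (bl : Bool),
      ((g u bl : ℝ) ∈ Set.Ioo u t) ∧ (bl = true → V (g u bl) < x) ∧ (bl = false → x < V (g u bl)) := by
    intro u hu bl
    simp only [hgdef, dif_pos hu]
    exact Classical.choose_spec (step u hu bl)
  set q : ℕ → ℚ := chainAux g a with hqdef
  -- invariant
  have hinv : ∀ i, (q i : ℝ) ∈ Set.Ioo a t ∧ (Even i → V (q i) < x) ∧ (¬ Even i → x < V (q i)) := by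
    intro i
    induction i with
    | zero =>
      have hmem : a ∈ Set.Ico a t := ⟨le_rfl, ht.1⟩
      have := hg a hmem true
      exact ⟨this.1, fun _ => this.2.1 rfl, fun h => absurd Even.zero h⟩
    | succ n ih =>
      have hmem : ((q n : ℚ) : ℝ) ∈ Set.Ico a t := ⟨le_of_lt ih.1.1, ih.1.2⟩
      have hstep := hg _ hmem (decide (Even (n+1)))
      have hq1 : q (n+1) = g ((q n : ℚ) : ℝ) (decide (Even (n+1))) := rfl
      constructor
      · rw [hq1]
        exact ⟨ih.1.1.trans hstep.1.1, hstep.1.2⟩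
      constructor
      · intro he
        rw [hq1]
        exact hstep.2.1 (by simp [he])
      · intro he
        rw [hq1]
        exact hstep.2.2 (by simp [he])
  have hsucc : ∀ n, ((q n : ℚ) : ℝ) < ((q (n+1) : ℚ) : ℝ) := by
    intro n
    have hmem : ((q n : ℚ) : ℝ) ∈ Set.Ico a t := ⟨le_of_lt (hinv n).1.1, (hinv n).1.2⟩
    exact (hg _ hmem (decide (Even (n+1)))).1.1
  refine ⟨q, fun i => ⟨⟨(hinv i).1.1, lt_of_lt_of_le (hinv i).1.2 ht.2⟩, hsucc i, ?_, ?_⟩⟩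
  · rcases Nat.even_or_odd i with he | ho
    · exact (min_le_left _ _).trans (le_of_lt ((hinv i).2.1 he))
    · have he1 : Even (i+1) := by simp [Nat.even_add_one, Nat.not_even_iff_odd, ho]
      exact (min_le_right _ _).trans (le_of_lt ((hinv (i+1)).2.1 he1))
  · rcases Nat.even_or_odd i with he | ho
    · have ho1 : ¬ Even (i+1) := by simp [Nat.even_add_one, he]
      exact le_of_lt ((hinv (i+1)).2.2 ho1) |>.trans (le_max_right _ _)
    · exact le_of_lt ((hinv i).2.2 (Nat.not_even_iff_odd.2 ho)) |>.trans (le_max_left _ _)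

end Chain

section Bad4

/-- The set of levels across which `V` alternates infinitely often (accumulating from the left
at some time in `(a,b]`) is Lebesgue-null, thanks to bounded variation. -/
lemma bad4_null (V : ℝ → ℝ) {a b : ℝ} (ha : 0 ≤ a) (hab : a < b)
    (hrc : ∀ s ∈ Set.Ici (0:ℝ), ContinuousWithinAt V (Set.Ici s) s)
    (hbv : eVariationOn V (Set.Icc a b) ≠ ⊤) :
    volume {x : ℝ | ∃ t ∈ Set.Ioc a b, ∀ u ∈ Set.Ico a t,
      (∃ s ∈ Set.Ioo u t, V s < x) ∧ (∃ s ∈ Set.Ioo u t, x < V s)} = 0 := by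
  set Var := eVariationOn V (Set.Icc a b) with hVar
  set Bad := {x : ℝ | ∃ t ∈ Set.Ioc a b, ∀ u ∈ Set.Ico a t,
      (∃ s ∈ Set.Ioo u t, V s < x) ∧ (∃ s ∈ Set.Ioo u t, x < V s)} with hBad
  -- Bad ⊆ {x | n ≤ countFn k x} for some k, for every n
  have hsub : ∀ n : ℕ, Bad ⊆ ⋃ k : ℕ, {x | (n : ℝ≥0∞) ≤ countFn V a b k x} := by
    intro n x hx
    obtain ⟨q, hq⟩ := infAlt_chain V ha hrc hx
    set k := ((Finset.range (n+1)).sup (fun i => Denumerable.eqv ℚ (q i))) + 1 with hk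
    refine Set.mem_iUnion.2 ⟨k, ?_⟩
    have hmem : ∀ i ≤ n, ((q i : ℚ) : ℝ) ∈ gridL a b k := by
      intro i hi
      refine mem_gridL a b (Set.mem_Icc.2 ⟨le_of_lt (hq i).1.1, le_of_lt (hq i).1.2⟩) ?_
      have hle : Denumerable.eqv ℚ (q i) ≤ (Finset.range (n+1)).sup (fun i => Denumerable.eqv ℚ (q i)) :=
        Finset.le_sup (f := fun i => Denumerable.eqv ℚ (q i)) (Finset.mem_range.2 (Nat.lt_succ_of_le hi))
      omega
    exact countFn_chain_le V a b (fun i => ((q i : ℚ) : ℝ)) hmem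
      (fun i _ => (hq i).2.1) (fun i _ => (hq i).2.2)
  -- each union has measure at most Var / n
  have hbound : ∀ n : ℕ, 1 ≤ n → volume (⋃ k : ℕ, {x | (n : ℝ≥0∞) ≤ countFn V a b k x}) ≤ Var / n := by
    intro n hn
    have hdir : Directed (· ⊆ ·) (fun k => {x | (n : ℝ≥0∞) ≤ countFn V a b k x}) := by
      apply Monotone.directed_le
      intro k k' hk x hx
      exact le_trans hx (countFn_mono V a b hk x)
    rw [Directed.measure_iUnion hdir]
    refine iSup_le fun k => ?_
    have hmark := mul_meas_ge_le_lintegral₀ (μ := volume) ((countFn_measurable V a b k).aemeasurable) (n : ℝ≥0∞)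
    have h2 : (n : ℝ≥0∞) * volume {x | (n : ℝ≥0∞) ≤ countFn V a b k x} ≤ Var :=
      hmark.trans (countFn_lintegral V a b (le_of_lt hab) k)
    have hnz : (n:ℝ≥0∞) ≠ 0 := Nat.cast_ne_zero.2 (by omega)
    rw [ENNReal.le_div_iff_mul_le (Or.inl hnz) (Or.inl (ENNReal.natCast_ne_top n))]
    rwa [mul_comm]
  -- conclude
  by_contra hpos
  have hne : volume Bad ≠ 0 := hpos
  have hfin : volume Bad ≠ ⊤ := by
    intro htop
    have := (measure_mono (hsub 1)).trans (hbound 1 le_rfl)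
    rw [htop] at this
    simp at this
    exact hbv (by simpa [hVar] using this)
  obtain ⟨n, hn⟩ := ENNReal.exists_nat_gt ((ENNReal.div_lt_top hbv hne).ne)
  have hn1 : 1 ≤ n := by
    rcases Nat.eq_zero_or_pos n with rfl | h
    · simp at hn
    · exact h
  have h3 : volume Bad ≤ Var / n := (measure_mono (hsub n)).trans (hbound n hn1)
  have h4 : Var / volume Bad < n := hn
  have h5 : Var < volume Bad * n := by
    rw [ENNReal.div_lt_iff (Or.inl hne) (Or.inl hfin)] at h4
    first
    | exact h4
    | exact lt_of_lt_of_eq h4 (mul_comm _ _)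
  have h6 : volume Bad * (n:ℝ≥0∞) ≤ Var := by
    have hnz : (n:ℝ≥0∞) ≠ 0 := Nat.cast_ne_zero.2 (by omega)
    rwa [ENNReal.le_div_iff_mul_le (Or.inl hnz) (Or.inl (ENNReal.natCast_ne_top n))] at h3
  exact absurd (h5.trans_le h6) (lt_irrefl _)

end Bad4

section Exceptional

/-- values attained as a minimum of `V` over some rational interval (countably many). -/
def ratMinVals (V : ℝ → ℝ) : Set ℝ :=
  {y | ∃ p q : ℚ, ∃ s : ℝ, s ∈ Set.Ioo (p:ℝ) (q:ℝ) ∧ V s = y ∧ ∀ r ∈ Set.Ioo (p:ℝ) (q:ℝ), y ≤ V r}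

def ratMaxVals (V : ℝ → ℝ) : Set ℝ :=
  {y | ∃ p q : ℚ, ∃ s : ℝ, s ∈ Set.Ioo (p:ℝ) (q:ℝ) ∧ V s = y ∧ ∀ r ∈ Set.Ioo (p:ℝ) (q:ℝ), V r ≤ y}

lemma ratMinVals_countable (V : ℝ → ℝ) : (ratMinVals V).Countable := by
  have : ratMinVals V = ⋃ pq : ℚ × ℚ,
      {y | ∃ s : ℝ, s ∈ Set.Ioo (pq.1:ℝ) (pq.2:ℝ) ∧ V s = y ∧
        ∀ r ∈ Set.Ioo (pq.1:ℝ) (pq.2:ℝ), y ≤ V r} := by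
    ext y
    simp only [ratMinVals, Set.mem_setOf_eq, Set.mem_iUnion, Prod.exists]
  rw [this]
  refine Set.countable_iUnion fun pq => Set.Subsingleton.countable ?_
  rintro y₁ ⟨s₁, hs₁, rfl, h₁⟩ y₂ ⟨s₂, hs₂, rfl, h₂⟩
  exact le_antisymm (h₁ s₂ hs₂) (h₂ s₁ hs₁)

lemma ratMaxVals_countable (V : ℝ → ℝ) : (ratMaxVals V).Countable := by
  have : ratMaxVals V = ⋃ pq : ℚ × ℚ,
      {y | ∃ s : ℝ, s ∈ Set.Ioo (pq.1:ℝ) (pq.2:ℝ) ∧ V s = y ∧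
        ∀ r ∈ Set.Ioo (pq.1:ℝ) (pq.2:ℝ), V r ≤ y} := by
    ext y
    simp only [ratMaxVals, Set.mem_setOf_eq, Set.mem_iUnion, Prod.exists]
  rw [this]
  refine Set.countable_iUnion fun pq => Set.Subsingleton.countable ?_
  rintro y₁ ⟨s₁, hs₁, rfl, h₁⟩ y₂ ⟨s₂, hs₂, rfl, h₂⟩
  exact le_antisymm (h₂ s₁ hs₁) (h₁ s₂ hs₂)

end Exceptional

section Claim2

/-- If `x` is a good level in `(V a, V b)`, then `V` increases through `x`. -/
lemma increases_of_good (V Vm : ℝ → ℝ) {a b x : ℝ} (ha : 0 ≤ a) (hab : a < b)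
    (hrc : ∀ s ∈ Set.Ici (0:ℝ), ContinuousWithinAt V (Set.Ici s) s)
    (hll : ∀ s ∈ Set.Ioi (0:ℝ), Filter.Tendsto V (nhdsWithin s (Set.Iio s)) (nhds (Vm s)))
    (hxa : V a < x) (hxb : x < V b)
    (hjump : ∀ s ∈ Set.Ioc a b, V s ≠ Vm s →
      x ∉ Set.Icc (min (Vm s) (V s)) (max (Vm s) (V s)))
    (hmin : x ∉ ratMinVals V) (hmax : x ∉ ratMaxVals V)
    (hbad : ¬ ∃ t ∈ Set.Ioc a b, ∀ u ∈ Set.Ico a t,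
      (∃ s ∈ Set.Ioo u t, V s < x) ∧ (∃ s ∈ Set.Ioo u t, x < V s)) :
    ∃ t, IncreasesThrough V x t := by
  set A := {t : ℝ | t ∈ Set.Icc a b ∧ V t < x} with hA
  have haA : a ∈ A := ⟨⟨le_rfl, hab.le⟩, hxa⟩
  have hAne : A.Nonempty := ⟨a, haA⟩
  have hAbdd : BddAbove A := ⟨b, fun t ht => ht.1.2⟩
  set c := sSup A with hc
  have hca : a ≤ c := le_csSup hAbdd haA
  have hcb : c ≤ b := csSup_le hAne (fun t ht => ht.1.2)
  have hR1 : ∀ s, c < s → s ≤ b → x ≤ V s := by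
    intro s hcs hsb
    by_contra h
    push_neg at h
    exact absurd (le_csSup hAbdd ⟨⟨hca.trans hcs.le, hsb⟩, h⟩) (not_le_of_gt hcs)
  have hac : a < c := by
    rcases eq_or_lt_of_le hca with heq | h
    · exfalso
      have htd : Filter.Tendsto V (nhdsWithin a (Set.Ioi a)) (nhds (V a)) :=
        (hrc a ha).mono_left (nhdsWithin_mono a Set.Ioi_subset_Ici_self)
      have hev : ∀ᶠ s in nhdsWithin a (Set.Ioi a), x ≤ V s := by
        filter_upwards [Ioc_mem_nhdsGT hab] with s hs
        exact hR1 s (heq ▸ hs.1) hs.2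
      exact absurd (ge_of_tendsto htd hev) (not_le_of_gt hxa)
    · exact h
  have hc0 : 0 < c := lt_of_le_of_lt ha hac
  -- left structure: V < x strictly on some left neighborhood (u, c)
  have hL : ∃ u ∈ Set.Ico a c, ∀ s ∈ Set.Ioo u c, V s < x := by
    by_cases hP : ∃ u ∈ Set.Ico a c, ∀ s ∈ Set.Ioo u c, x ≤ V s
    · exfalso
      obtain ⟨u, hu, hVge⟩ := hP
      have hVgt : ∀ s ∈ Set.Ioo u c, x < V s := by
        intro s hs
        rcases lt_or_eq_of_le (hVge s hs) with h | h
        · exact h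
        · exfalso
          obtain ⟨p, hp1, hp2⟩ := exists_rat_btwn hs.1
          obtain ⟨qq, hq1, hq2⟩ := exists_rat_btwn hs.2
          exact hmin ⟨p, qq, s, ⟨hp2, hq1⟩, h.symm,
            fun r hr => hVge r ⟨hp1.trans hr.1, hr.2.trans hq2⟩⟩
      have hVclt : V c < x := by
        obtain ⟨t, htA, htu⟩ := exists_lt_of_lt_csSup hAne hu.2
        rcases eq_or_lt_of_le (le_csSup hAbdd htA) with heq | hlt
        · rw [hc, ← heq]; exact htA.2
        · exact absurd (hVgt t ⟨htu, hlt⟩) (not_lt_of_gt htA.2)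
      have hVmge : x ≤ Vm c := by
        refine ge_of_tendsto (hll c hc0) ?_
        filter_upwards [Ioo_mem_nhdsLT hu.2] with s hs
        exact le_of_lt (hVgt s hs)
      refine hjump c ⟨hac, hcb⟩ (fun heq => ?_) ?_
      · rw [heq] at hVclt; exact absurd hVmge (not_le_of_gt hVclt)
      · exact ⟨(min_le_right _ _).trans hVclt.le, le_trans hVmge (le_max_left _ _)⟩
    · push_neg at hP
      by_cases hQ : ∃ u ∈ Set.Ico a c, ∀ s ∈ Set.Ioo u c, V s ≤ x
      · obtain ⟨u, hu, hVle⟩ := hQ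
        refine ⟨u, hu, fun s hs => ?_⟩
        rcases lt_or_eq_of_le (hVle s hs) with h | h
        · exact h
        · exfalso
          obtain ⟨p, hp1, hp2⟩ := exists_rat_btwn hs.1
          obtain ⟨qq, hq1, hq2⟩ := exists_rat_btwn hs.2
          exact hmax ⟨p, qq, s, ⟨hp2, hq1⟩, h,
            fun r hr => hVle r ⟨hp1.trans hr.1, hr.2.trans hq2⟩⟩
      · exfalso
        push_neg at hQ
        exact hbad ⟨c, ⟨hac, hcb⟩, fun u hu => ⟨hP u hu, hQ u hu⟩⟩
  obtain ⟨u, hu, hVlt⟩ := hL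
  have hVmle : Vm c ≤ x := by
    refine le_of_tendsto (hll c hc0) ?_
    filter_upwards [Ioo_mem_nhdsLT hu.2] with s hs
    exact le_of_lt (hVlt s hs)
  have hVcge : x ≤ V c := by
    rcases lt_or_eq_of_le hcb with hlt | heq
    · have htd : Filter.Tendsto V (nhdsWithin c (Set.Ioi c)) (nhds (V c)) :=
        (hrc c (ha.trans hca)).mono_left (nhdsWithin_mono c Set.Ioi_subset_Ici_self)
      refine ge_of_tendsto htd ?_
      filter_upwards [Ioo_mem_nhdsGT hlt] with s hs
      exact hR1 s hs.1 (le_of_lt hs.2)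
    · exact heq ▸ le_of_lt hxb
  have hVc : V c = x := by
    rcases lt_or_eq_of_le hVcge with h | h
    · exfalso
      refine hjump c ⟨hac, hcb⟩ (fun heq => ?_) ?_
      · rw [heq] at h; exact absurd hVmle (not_le_of_gt h)
      · exact ⟨(min_le_left _ _).trans hVmle, le_trans h.le (le_max_right _ _)⟩
    · exact h.symm
  have hVmc : Vm c = x := by
    rcases lt_or_eq_of_le hVmle with h | h
    · exfalso
      refine hjump c ⟨hac, hcb⟩ (fun heq => ?_) ?_
      · rw [← heq, hVc] at h; exact absurd h (lt_irrefl x)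
      · exact ⟨(min_le_left _ _).trans h.le, le_trans (le_of_eq hVc.symm) (le_max_right _ _)⟩
    · exact h
  have hcltb : c < b := by
    rcases lt_or_eq_of_le hcb with h | h
    · exact h
    · exfalso; rw [h] at hVc; exact absurd hVc.symm (ne_of_lt hxb)
  have hgt : ∀ s ∈ Set.Ioo c b, x < V s := by
    intro s hs
    rcases lt_or_eq_of_le (hR1 s hs.1 (le_of_lt hs.2)) with h | h
    · exact h
    · exfalso
      obtain ⟨p, hp1, hp2⟩ := exists_rat_btwn hs.1
      obtain ⟨qq, hq1, hq2⟩ := exists_rat_btwn hs.2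
      refine hmin ⟨p, qq, s, ⟨hp2, hq1⟩, h.symm, fun r hr => ?_⟩
      exact hR1 r (hp1.trans hr.1) (le_of_lt (hr.2.trans hq2))
  have hcont : ContinuousAt V c := by
    have hleft : Filter.Tendsto V (nhdsWithin c (Set.Iio c)) (nhds (V c)) := by
      rw [hVc, ← hVmc]; exact hll c hc0
    have hright : Filter.Tendsto V (nhdsWithin c (Set.Ici c)) (nhds (V c)) := hrc c (ha.trans hca)
    have := hleft.sup hright
    rwa [nhdsLT_sup_nhdsGE] at this
  refine ⟨c, hc0, hVc, hcont.continuousWithinAt, min (c - u) (b - c),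
    lt_min (sub_pos.2 hu.2) (sub_pos.2 hcltb), ?_⟩
  intro s _ habs
  rw [abs_lt] at habs
  constructor
  · intro hsc
    have hs : s ∈ Set.Ioo u c := by
      constructor
      · have := habs.1
        have h2 : -(c - u) ≤ -(min (c - u) (b - c)) := neg_le_neg (min_le_left _ _)
        linarith
      · exact hsc
    rw [hVc]; exact hVlt s hs
  · intro hcs
    have hs : s ∈ Set.Ioo c b := by
      refine ⟨hcs, ?_⟩
      have := habs.2
      have h2 : min (c - u) (b - c) ≤ b - c := min_le_right _ _
      linarith
    rw [hVc]; exact hgt s hs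

end Claim2

section MainInc

open MeasureTheory

/-- Main lemma: if the jumps on `(a,b]` sum to less than `V b - V a`, then the set of levels
through which `V` increases has positive measure. -/
lemma volume_pos_incSet (V Vm : ℝ → ℝ) {a b : ℝ} (ha : 0 ≤ a) (hab : a < b)
    (hrc : ∀ s ∈ Set.Ici (0:ℝ), ContinuousWithinAt V (Set.Ici s) s)
    (hll : ∀ s ∈ Set.Ioi (0:ℝ), Filter.Tendsto V (nhdsWithin s (Set.Iio s)) (nhds (Vm s)))
    (hbv : BoundedVariationOn V (Set.Icc 0 b))
    (hsum : Summable ((Set.Ioc a b).indicator (fun s => |V s - Vm s|)))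
    (hgap : (∑' s, (Set.Ioc a b).indicator (fun s => |V s - Vm s|) s) < V b - V a) :
    0 < volume {x : ℝ | ∃ t, IncreasesThrough V x t} := by
  classical
  set g : ℝ → ℝ := (Set.Ioc a b).indicator (fun s => |V s - Vm s|) with hg
  set J : ℝ := ∑' s, g s with hJ
  have hJ0 : 0 ≤ J := tsum_nonneg (fun s => Set.indicator_nonneg (fun _ _ => abs_nonneg _) s)
  set K : Set ℝ := Function.support g with hK
  have hKc : K.Countable := hsum.countable_support
  have hKsub : K ⊆ Set.Ioc a b := by
    intro s hs
    by_contra h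
    exact hs (Set.indicator_of_notMem h _)
  set Jmp : Set ℝ := ⋃ s ∈ K, Set.Icc (min (Vm s) (V s)) (max (Vm s) (V s)) with hJmp
  have hJmpVol : volume Jmp ≤ ENNReal.ofReal J := by
    refine (measure_biUnion_le volume hKc _).trans ?_
    have heq : ∀ s : K, volume (Set.Icc (min (Vm s) (V s)) (max (Vm s) (V s)))
        = ENNReal.ofReal (g s) := by
      intro ⟨s, hs⟩
      rw [Real.volume_Icc, max_sub_min_eq_abs]
      congr 1
      show |V ↑(⟨s, hs⟩ : ↥K) - Vm ↑(⟨s, hs⟩ : ↥K)|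
        = (Set.Ioc a b).indicator (fun s => |V s - Vm s|) ↑(⟨s, hs⟩ : ↥K)
      rw [Set.indicator_of_mem (hKsub hs)]
    rw [tsum_congr heq]
    have hsubsum : Summable (fun s : ↥K => g ↑s) := hsum.subtype K
    have e1 : ∑' (s : ↥K), ENNReal.ofReal (g ↑s) = ENNReal.ofReal (∑' (s : ↥K), g ↑s) :=
      (ENNReal.ofReal_tsum_of_nonneg (fun s => Set.indicator_nonneg (fun _ _ => abs_nonneg _) _)
        hsubsum).symm
    rw [e1]
    refine ENNReal.ofReal_le_ofReal (le_of_eq ?_)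
    exact tsum_subtype_eq_of_support_subset (subset_refl _)
  set Bad : Set ℝ := {x : ℝ | ∃ t ∈ Set.Ioc a b, ∀ u ∈ Set.Ico a t,
      (∃ s ∈ Set.Ioo u t, V s < x) ∧ (∃ s ∈ Set.Ioo u t, x < V s)} with hBad
  have hBadVol : volume Bad = 0 := by
    refine bad4_null V ha hab hrc ?_
    refine ne_top_of_le_ne_top hbv (eVariationOn.mono V ?_)
    exact Set.Icc_subset_Icc ha le_rfl
  set badS : Set ℝ := Jmp ∪ (ratMinVals V ∪ ratMaxVals V) ∪ Bad with hbadS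
  have hbadVol : volume badS ≤ ENNReal.ofReal J := by
    refine (measure_union_le _ _).trans ?_
    rw [hBadVol, add_zero]
    refine (measure_union_le _ _).trans ?_
    have h2 : volume (ratMinVals V ∪ ratMaxVals V) = 0 :=
      Set.Countable.measure_zero ((ratMinVals_countable V).union (ratMaxVals_countable V)) _
    rw [h2, add_zero]
    exact hJmpVol
  set Good : Set ℝ := Set.Ioo (V a) (V b) \ badS with hGood
  have hGoodSub : Good ⊆ {x : ℝ | ∃ t, IncreasesThrough V x t} := by
    intro x hx
    obtain ⟨hxIoo, hxbad⟩ := hx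
    have hnJmp : x ∉ Jmp := fun h => hxbad (Or.inl (Or.inl h))
    have hnE : x ∉ ratMinVals V ∧ x ∉ ratMaxVals V :=
      ⟨fun h => hxbad (Or.inl (Or.inr (Or.inl h))), fun h => hxbad (Or.inl (Or.inr (Or.inr h)))⟩
    have hnBad : x ∉ Bad := fun h => hxbad (Or.inr h)
    refine increases_of_good V Vm ha hab hrc hll hxIoo.1 hxIoo.2 ?_ hnE.1 hnE.2 hnBad
    intro s hs hne hmem
    refine hnJmp ?_
    refine Set.mem_biUnion ?_ hmem
    rw [hK, Function.mem_support, hg, Set.indicator_of_mem hs]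
    simpa using sub_ne_zero.2 hne
  have hGoodPos : 0 < volume Good := by
    rcases (zero_le : 0 ≤ volume Good).lt_or_eq with h | h
    · exact h
    · exfalso
      have hcov : Set.Ioo (V a) (V b) ⊆ Good ∪ badS := by
        intro x hx
        by_cases hb : x ∈ badS
        · exact Or.inr hb
        · exact Or.inl ⟨hx, hb⟩
      have h1 : volume (Set.Ioo (V a) (V b)) ≤ ENNReal.ofReal J := by
        refine (measure_mono hcov).trans ((measure_union_le _ _).trans ?_)
        rw [← h, zero_add]
        exact hbadVol
      rw [Real.volume_Ioo] at h1
      have h2 : ENNReal.ofReal (V b - V a) ≤ ENNReal.ofReal J := h1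
      rw [ENNReal.ofReal_le_ofReal_iff hJ0] at h2
      exact absurd hgap (not_lt_of_ge h2)
  exact hGoodPos.trans_le (measure_mono hGoodSub)

end MainInc

section Selection

/-- A continuous function cannot have all its increments dominated by an (atomic) absolutely
convergent jump sum; so some interval has a `3:1` gap. -/
lemma exists_gap_interval (V Vm Vc : ℝ → ℝ)
    (hVc_cont : ContinuousOn Vc (Set.Ici 0))
    (hVd_abs : ∀ s ∈ Set.Ici (0:ℝ), Summable (fun u : Set.Ioc (0:ℝ) s => |V u.1 - Vm u.1|))
    (hVc_nondeg : ∃ s ∈ Set.Ici (0:ℝ), Vc s ≠ Vc 0) :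
    ∃ a b : ℝ, 0 ≤ a ∧ a < b ∧
      Summable ((Set.Ioc a b).indicator (fun s => |V s - Vm s|)) ∧
      3 * (∑' s, (Set.Ioc a b).indicator (fun s => |V s - Vm s|) s) < |Vc b - Vc a| := by
  classical
  set f : ℝ → ℝ := fun s => |V s - Vm s| with hf
  obtain ⟨T, hT0, hTne⟩ := hVc_nondeg
  have hTpos : 0 < T := by
    rcases eq_or_lt_of_le (Set.mem_Ici.1 hT0) with h | h
    · exfalso; exact hTne (by rw [← h])
    · exact h
  set h : ℝ → ℝ := (Set.Ioc 0 T).indicator f with hh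
  have hsumT : Summable h := summable_subtype_iff_indicator.1 (hVd_abs T hT0)
  have hsumIoc : ∀ a b : ℝ, 0 ≤ a → b ≤ T → Summable ((Set.Ioc a b).indicator f) := by
    intro a b ha hb
    have hss : Set.Ioc a b ⊆ Set.Ioc 0 T := fun x hx => ⟨lt_of_le_of_lt ha hx.1, hx.2.trans hb⟩
    have : (Set.Ioc a b).indicator f = (Set.Ioc a b).indicator h := by
      rw [hh, Set.indicator_indicator, Set.inter_eq_self_of_subset_left hss]
    rw [this]
    exact hsumT.indicator _
  by_contra hcon
  push_neg at hcon
  -- hcon : ∀ a b, 0 ≤ a → a < b → summable → |Vc b - Vc a| ≤ 3 * ∑' ...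
  have hcon' : ∀ a b : ℝ, 0 ≤ a → a < b → b ≤ T →
      |Vc b - Vc a| ≤ 3 * ∑' s, (Set.Ioc a b).indicator f s := by
    intro a b ha hab hb
    exact hcon a b ha hab (hsumIoc a b ha hb)
  -- main ε-claim
  have hclaim : ∀ ε : ℝ, 0 < ε → |Vc T - Vc 0| ≤ ε * (4 + T) := by
    intro ε hε
    -- a finite set capturing all but ε of the jumps
    obtain ⟨Φ, hΦ⟩ : ∃ Φ : Finset ℝ, (∑' (s : {x : ℝ // x ∉ Φ}), h s) < ε := by
      have := tendsto_tsum_compl_atTop_zero h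
      rw [Metric.tendsto_atTop] at this
      obtain ⟨Φ, hΦ⟩ := this ε hε
      refine ⟨Φ, ?_⟩
      have := hΦ Φ le_rfl
      rw [Real.dist_eq, sub_zero] at this
      exact lt_of_le_of_lt (le_abs_self _) this
    have htail : ∀ s : Set ℝ, Disjoint s ↑Φ → ∑' x, s.indicator h x ≤ ε := by
      intro s hdisj
      have h1 : ∑' x, s.indicator h x ≤ ∑' x, ((↑Φ : Set ℝ)ᶜ).indicator h x := by
        refine Summable.tsum_le_tsum ?_ (hsumT.indicator _) (hsumT.indicator _)
        intro x
        refine Set.indicator_le_indicator_of_subset ?_ ?_ x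
        · exact fun y hy => Set.disjoint_left.1 hdisj hy
        · exact fun y => Set.indicator_nonneg (fun _ _ => abs_nonneg _) _
      refine h1.trans ?_
      have h2 : ∑' x, ((↑Φ : Set ℝ)ᶜ).indicator h x = ∑' (x : ↥((↑Φ : Set ℝ)ᶜ)), h x :=
        (tsum_subtype _ h).symm
      rw [h2]
      exact hΦ.le
    have hh0 : ∀ x, 0 ≤ h x := fun x => Set.indicator_nonneg (fun _ _ => abs_nonneg _) x
    set Fs : ℝ → ℝ := fun t => ∑' x, ((Set.Ioc 0 t) \ ↑Φ).indicator h x with hFs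
    have hFsum : ∀ t : ℝ, Summable (((Set.Ioc 0 t) \ ↑Φ).indicator h) := fun t => hsumT.indicator _
    have hFs0 : ∀ t, 0 ≤ Fs t :=
      fun t => tsum_nonneg (fun x => Set.indicator_nonneg (fun y _ => hh0 y) x)
    have hFsmono : ∀ {t t' : ℝ}, t ≤ t' → Fs t ≤ Fs t' := by
      intro t t' htt
      refine Summable.tsum_le_tsum (fun x => Set.indicator_le_indicator_of_subset ?_ (fun y => hh0 y) x)
        (hFsum t) (hFsum t')
      exact Set.diff_subset_diff_left (Set.Ioc_subset_Ioc_right htt)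
    have hFsT : Fs T ≤ ε := htail _ disjoint_sdiff_left
    have hincr : ∀ c t : ℝ, 0 ≤ c → c ≤ t → t ≤ T → Disjoint (Set.Ioc c t) ↑Φ →
        Fs t = Fs c + ∑' x, (Set.Ioc c t).indicator f x := by
      intro c t hc hct htT hdisj
      have hsplit : (Set.Ioc 0 t) \ ↑Φ = ((Set.Ioc 0 c) \ ↑Φ) ∪ ((Set.Ioc c t) \ ↑Φ) := by
        rw [← Set.Ioc_union_Ioc_eq_Ioc hc hct, Set.union_diff_distrib]
      have hdisj2 : Disjoint ((Set.Ioc 0 c) \ ↑Φ) ((Set.Ioc c t) \ ↑Φ) :=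
        Set.disjoint_of_subset Set.diff_subset Set.diff_subset (Set.Ioc_disjoint_Ioc_of_le le_rfl)
      have e1 : Fs t = Fs c + ∑' x, ((Set.Ioc c t) \ ↑Φ).indicator h x := by
        rw [hFs]
        simp only []
        rw [hsplit, Set.indicator_union_of_disjoint hdisj2]
        exact Summable.tsum_add (hsumT.indicator _) (hsumT.indicator _)
      rw [e1]
      congr 1
      have e2 : (Set.Ioc c t) \ ↑Φ = Set.Ioc c t := sdiff_eq_left.2 hdisj
      rw [e2]
      have hss : Set.Ioc c t ⊆ Set.Ioc 0 T := fun x hx => ⟨lt_of_le_of_lt hc hx.1, hx.2.trans htT⟩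
      rw [hh, Set.indicator_indicator, Set.inter_eq_self_of_subset_left hss]
    set P : ℝ → Prop := fun t => |Vc t - Vc 0| ≤ 3 * Fs t + ε * (1 + t) with hP
    set A : Set ℝ := {t | t ∈ Set.Icc 0 T ∧ P t} with hA
    have h0A : (0:ℝ) ∈ A := by
      refine ⟨⟨le_rfl, hT0⟩, ?_⟩
      show |Vc 0 - Vc 0| ≤ 3 * Fs 0 + ε * (1 + 0)
      rw [sub_self, abs_zero]
      nlinarith [hFs0 0]
    have hAne : A.Nonempty := ⟨0, h0A⟩
    have hAbdd : BddAbove A := ⟨T, fun t ht => ht.1.2⟩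
    set c := sSup A with hcdef
    have hc0 : 0 ≤ c := le_csSup hAbdd h0A
    have hcT : c ≤ T := csSup_le hAne (fun t ht => ht.1.2)
    have hPc : P c := by
      obtain ⟨t, hmono, htend, hmem⟩ := exists_seq_tendsto_sSup hAne hAbdd
      have hVcc : Filter.Tendsto (fun n => Vc (t n)) Filter.atTop (nhds (Vc c)) := by
        have hcw : ContinuousWithinAt Vc (Set.Ici 0) c := hVc_cont c hc0
        refine hcw.tendsto.comp ?_
        rw [tendsto_nhdsWithin_iff]
        exact ⟨htend, Filter.Eventually.of_forall (fun n => (hmem n).1.1)⟩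
      have hbnd : ∀ n, |Vc (t n) - Vc 0| ≤ 3 * Fs c + ε * (1 + t n) := by
        intro n
        have hle : t n ≤ c := le_csSup hAbdd (hmem n)
        have h2 := hFsmono hle
        have h3 := (hmem n).2
        show |Vc (t n) - Vc 0| ≤ 3 * Fs c + ε * (1 + t n)
        have h4 : |Vc (t n) - Vc 0| ≤ 3 * Fs (t n) + ε * (1 + t n) := h3
        nlinarith
      have hlim1 : Filter.Tendsto (fun n => |Vc (t n) - Vc 0|) Filter.atTop
          (nhds |Vc c - Vc 0|) := (hVcc.sub tendsto_const_nhds).abs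
      have hlim2 : Filter.Tendsto (fun n => 3 * Fs c + ε * (1 + t n)) Filter.atTop
          (nhds (3 * Fs c + ε * (1 + c))) :=
        tendsto_const_nhds.add ((tendsto_const_nhds.add htend).const_mul ε)
      exact le_of_tendsto_of_tendsto' hlim1 hlim2 hbnd
    have hcT' : c = T := by
      by_contra hne
      have hclt : c < T := lt_of_le_of_ne hcT hne
      obtain ⟨t, hct, htT, hdisj⟩ : ∃ t, c < t ∧ t ≤ T ∧ Disjoint (Set.Ioc c t) ↑Φ := by
        set Φ' := Φ.filter (fun s => c < s) with hΦ'
        by_cases hne' : Φ'.Nonempty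
        · set t0 := Φ'.min' hne' with ht0def
          have ht0c : c < t0 := (Finset.mem_filter.1 (Φ'.min'_mem hne')).2
          refine ⟨min ((c + t0)/2) T, lt_min (by linarith) hclt, min_le_right _ _, ?_⟩
          rw [Set.disjoint_right]
          intro s hsΦ hs
          have hs1 : c < s := hs.1
          have ht0le : t0 ≤ s := Φ'.min'_le s (Finset.mem_filter.2 ⟨hsΦ, hs1⟩)
          have h5 : s ≤ (c + t0)/2 := le_trans hs.2 (min_le_left _ _)
          linarith
        · refine ⟨T, hclt, le_rfl, ?_⟩
          rw [Set.disjoint_right]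
          intro s hsΦ hs
          exact hne' ⟨s, Finset.mem_filter.2 ⟨hsΦ, hs.1⟩⟩
      have hPt : P t := by
        have hstep := hcon' c t hc0 hct htT
        have hFt := hincr c t hc0 (le_of_lt hct) htT hdisj
        show |Vc t - Vc 0| ≤ 3 * Fs t + ε * (1 + t)
        have e2 : ∑' x, (Set.Ioc c t).indicator f x = Fs t - Fs c := by rw [hFt]; ring
        have hPcc : |Vc c - Vc 0| ≤ 3 * Fs c + ε * (1 + c) := hPc
        have hmul : ε * (1 + c) ≤ ε * (1 + t) :=
          mul_le_mul_of_nonneg_left (by linarith) hε.le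
        calc |Vc t - Vc 0| ≤ |Vc t - Vc c| + |Vc c - Vc 0| := abs_sub_le _ _ _
          _ ≤ 3 * (Fs t - Fs c) + (3 * Fs c + ε * (1 + c)) := by
              refine add_le_add ?_ hPcc
              rw [← e2]
              exact hstep
          _ ≤ 3 * Fs t + ε * (1 + t) := by nlinarith
      exact absurd (le_csSup hAbdd ⟨⟨hc0.trans (le_of_lt hct), htT⟩, hPt⟩) (not_le_of_gt hct)
    have hfin : |Vc T - Vc 0| ≤ 3 * Fs T + ε * (1 + T) := by
      have := hPc
      rw [hcT'] at this
      exact this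
    calc |Vc T - Vc 0| ≤ 3 * Fs T + ε * (1 + T) := hfin
      _ ≤ 3 * ε + ε * (1 + T) := by nlinarith [hFsT]
      _ = ε * (4 + T) := by ring
  set D := |Vc T - Vc 0| with hD
  have hDpos : 0 < D := abs_pos.2 (sub_ne_zero.2 hTne)
  have h4T : (0:ℝ) < 4 + T := by linarith
  have hfin := hclaim (D / (2 * (4 + T))) (by positivity)
  have : D ≤ D / 2 := by
    refine hfin.trans (le_of_eq ?_)
    field_simp
  linarith

end Selection

lemma eVariationOn_neg_le (f : ℝ → ℝ) (s : Set ℝ) :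
    eVariationOn (fun x => -f x) s ≤ eVariationOn f s := by
  rw [eVariationOn]
  refine iSup_le fun p => ?_
  have he : ∀ i, edist (-f (p.2.1 (i+1))) (-f (p.2.1 i)) = edist (f (p.2.1 (i+1))) (f (p.2.1 i)) :=
    fun i => edist_neg_neg _ _
  rw [Finset.sum_congr rfl (fun i _ => he i)]
  exact eVariationOn.sum_le (f := f) (n := p.1) p.2.2.1 p.2.2.2


/-- Let `V` be càdlàg on `[0,∞)` with finite variation on compacts, with
canonical decomposition `V = Vc + Vd`. If the continuous part is nondegenerate, i.e. `Vc`
is not identically equal to `Vc 0` on `[0,∞)`, then the set of levels `x` through which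
`V` increases or decreases at some time has positive Lebesgue (outer) measure. -/
theorem positive_measure_of_crossed_levels
    (V Vm Vc Vd : ℝ → ℝ)
    (hV_rc : ∀ s ∈ Set.Ici (0 : ℝ), ContinuousWithinAt V (Set.Ici s) s)
    (hV_ll : ∀ s ∈ Set.Ioi (0 : ℝ),
      Filter.Tendsto V (nhdsWithin s (Set.Iio s)) (nhds (Vm s)))
    (hV_bv : ∀ T : ℝ, BoundedVariationOn V (Set.Icc 0 T))
    (hdecomp : ∀ s ∈ Set.Ici (0 : ℝ), V s = Vc s + Vd s)
    (hVc_cont : ContinuousOn Vc (Set.Ici 0))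
    (hVc_bv : ∀ T : ℝ, BoundedVariationOn Vc (Set.Icc 0 T))
    (hVd_sum : ∀ s ∈ Set.Ici (0 : ℝ),
      HasSum (fun u : Set.Ioc (0 : ℝ) s => V u.1 - Vm u.1) (Vd s))
    (hVd_abs : ∀ s ∈ Set.Ici (0 : ℝ),
      Summable (fun u : Set.Ioc (0 : ℝ) s => |V u.1 - Vm u.1|))
    (hVc_nondeg : ∃ s ∈ Set.Ici (0 : ℝ), Vc s ≠ Vc 0) :
    0 < volume {x : ℝ | ∃ s : ℝ, IncreasesThrough V x s ∨ DecreasesThrough V x s} := by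
  classical
  obtain ⟨a, b, ha, hab, hsum, hgap3⟩ := exists_gap_interval V Vm Vc hVc_cont hVd_abs hVc_nondeg
  set J : ℝ := ∑' s, (Set.Ioc a b).indicator (fun s => |V s - Vm s|) s with hJ
  have hJ0 : 0 ≤ J :=
    tsum_nonneg (fun s => Set.indicator_nonneg (fun _ _ => abs_nonneg _) s)
  have hb0 : (0:ℝ) ≤ b := ha.trans hab.le
  -- the jump part of the increment
  have hsum_d : HasSum ((Set.Ioc a b).indicator (fun s => V s - Vm s)) (Vd b - Vd a) := by
    have h1 : HasSum ((Set.Ioc (0:ℝ) b).indicator (fun s => V s - Vm s)) (Vd b) :=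
      hasSum_subtype_iff_indicator.1 (hVd_sum b hb0)
    have h2 : HasSum ((Set.Ioc (0:ℝ) a).indicator (fun s => V s - Vm s)) (Vd a) :=
      hasSum_subtype_iff_indicator.1 (hVd_sum a ha)
    have h3 := h1.sub h2
    have he : ∀ x, (Set.Ioc a b).indicator (fun s => V s - Vm s) x
        = (Set.Ioc (0:ℝ) b).indicator (fun s => V s - Vm s) x
          - (Set.Ioc (0:ℝ) a).indicator (fun s => V s - Vm s) x := by
      intro x
      by_cases hx1 : x ∈ Set.Ioc a b
      · rw [Set.indicator_of_mem hx1,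
          Set.indicator_of_mem (show x ∈ Set.Ioc (0:ℝ) b from ⟨lt_of_le_of_lt ha hx1.1, hx1.2⟩),
          Set.indicator_of_notMem
            (show x ∉ Set.Ioc (0:ℝ) a from fun hx2 => absurd hx2.2 (not_le_of_gt hx1.1)),
          sub_zero]
      · by_cases hx2 : x ∈ Set.Ioc (0:ℝ) a
        · rw [Set.indicator_of_notMem hx1, Set.indicator_of_mem hx2,
            Set.indicator_of_mem (show x ∈ Set.Ioc (0:ℝ) b from ⟨hx2.1, hx2.2.trans hab.le⟩),
            sub_self]
        · have hx3 : x ∉ Set.Ioc (0:ℝ) b := by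
            intro hx3
            rcases le_or_gt x a with h | h
            · exact hx2 ⟨hx3.1, h⟩
            · exact hx1 ⟨h, hx3.2⟩
          rw [Set.indicator_of_notMem hx1, Set.indicator_of_notMem hx2,
            Set.indicator_of_notMem hx3, sub_zero]
    have h4 : ((Set.Ioc a b).indicator (fun s => V s - Vm s))
        = fun x => (Set.Ioc (0:ℝ) b).indicator (fun s => V s - Vm s) x
          - (Set.Ioc (0:ℝ) a).indicator (fun s => V s - Vm s) x := funext he
    rw [h4]
    exact h3
  have habsd : |Vd b - Vd a| ≤ J := by
    rw [← hsum_d.tsum_eq]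
    have h6 : ∀ x, ‖(Set.Ioc a b).indicator (fun s => V s - Vm s) x‖
        = (Set.Ioc a b).indicator (fun s => |V s - Vm s|) x := by
      intro x
      by_cases hx : x ∈ Set.Ioc a b
      · rw [Set.indicator_of_mem hx, Set.indicator_of_mem hx, Real.norm_eq_abs]
      · rw [Set.indicator_of_notMem hx, Set.indicator_of_notMem hx, norm_zero]
    have h7 : Summable (fun x => ‖(Set.Ioc a b).indicator (fun s => V s - Vm s) x‖) := by
      rw [funext h6]
      exact hsum
    rw [← Real.norm_eq_abs]
    refine (norm_tsum_le_tsum_norm h7).trans (le_of_eq ?_)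
    rw [hJ]
    exact tsum_congr h6
  have hVb : V b = Vc b + Vd b := hdecomp b hb0
  have hVa : V a = Vc a + Vd a := hdecomp a ha
  rcases abs_cases (Vc b - Vc a) with ⟨habs, _⟩ | ⟨habs, _⟩
  · -- increasing case
    have hgap : J < V b - V a := by
      have h8 : 3 * J < Vc b - Vc a := by rwa [habs] at hgap3
      have h9 : -J ≤ Vd b - Vd a := (abs_le.1 habsd).1
      rw [hVb, hVa]
      linarith
    have hpos := volume_pos_incSet V Vm ha hab hV_rc hV_ll (hV_bv b) hsum hgap
    refine lt_of_lt_of_le hpos (measure_mono ?_)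
    rintro x ⟨t, ht⟩
    exact ⟨t, Or.inl ht⟩
  · -- decreasing case: apply the main lemma to -V
    have hrc' : ∀ s ∈ Set.Ici (0:ℝ), ContinuousWithinAt (fun y => -V y) (Set.Ici s) s :=
      fun s hs => (hV_rc s hs).neg
    have hll' : ∀ s ∈ Set.Ioi (0:ℝ),
        Filter.Tendsto (fun y => -V y) (nhdsWithin s (Set.Iio s)) (nhds (-Vm s)) :=
      fun s hs => (hV_ll s hs).neg
    have hbv' : BoundedVariationOn (fun y => -V y) (Set.Icc 0 b) :=
      ne_top_of_le_ne_top (hV_bv b) (eVariationOn_neg_le V (Set.Icc 0 b))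
    have hfeq : (Set.Ioc a b).indicator (fun s => |(fun y => -V y) s - (fun y => -Vm y) s|)
        = (Set.Ioc a b).indicator (fun s => |V s - Vm s|) := by
      refine Set.indicator_congr (fun y _ => ?_)
      rw [show -V y - -Vm y = -(V y - Vm y) by ring, abs_neg]
    have hsum' : Summable ((Set.Ioc a b).indicator
        (fun s => |(fun y => -V y) s - (fun y => -Vm y) s|)) := by
      rw [hfeq]; exact hsum
    have hgap' : (∑' s, (Set.Ioc a b).indicator
        (fun s => |(fun y => -V y) s - (fun y => -Vm y) s|) s)
        < (fun y => -V y) b - (fun y => -V y) a := by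
      rw [hfeq]
      have h8 : 3 * J < -(Vc b - Vc a) := by rwa [habs] at hgap3
      have h9 : Vd b - Vd a ≤ J := (abs_le.1 habsd).2
      show J < -V b - -V a
      rw [hVb, hVa]
      linarith
    have hpos := volume_pos_incSet (fun y => -V y) (fun y => -Vm y) ha hab hrc' hll' hbv'
      hsum' hgap'
    set S : Set ℝ := {x : ℝ | ∃ s : ℝ, IncreasesThrough V x s ∨ DecreasesThrough V x s} with hS
    have himg : {x : ℝ | ∃ t, IncreasesThrough (fun y => -V y) x t} ⊆ -S := by
      rintro y ⟨t, ht⟩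
      rw [Set.mem_neg]
      refine ⟨t, Or.inr ?_⟩
      unfold DecreasesThrough
      rw [neg_neg]
      exact ht
    calc 0 < volume {x : ℝ | ∃ t, IncreasesThrough (fun y => -V y) x t} := hpos
      _ ≤ volume (-S) := measure_mono himg
      _ = volume S := Measure.measure_neg volume S
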